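/- If additionally F preserves adjoints (F(f*) = F(f)* for all linear maps f between inner product spaces), then each coefficient u_n(V) in the expansion F(λ·id_V) = Σ u_n(V) λ^n is a self-adjoint (orthogonal) projection. -/

import Mathlib

private lemma coeff_zero' {N : ℕ} (c : ℕ → ℂ)
    (h : ∀ l : ℂ, ∑ n ∈ Finset.range N, l ^ n * c n = 0) :
    ∀ n, n < N → c n = 0 := by
  intro n hn
  have hp : (∑ k ∈ Finset.range N, Polynomial.C (c k) * Polynomial.X ^ k : Polynomial ℂ) = 0 := by
    apply Polynomial.funext
    intro l
    rw [Polynomial.eval_finset_sum, Polynomial.eval_zero, ← h l]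
    refine Finset.sum_congr rfl fun k _ => ?_
    rw [Polynomial.eval_mul, Polynomial.eval_C, Polynomial.eval_pow, Polynomial.eval_X, mul_comm]
  have h2 := congrArg (fun p => Polynomial.coeff p n) hp
  simpa [Polynomial.finset_sum_coeff, Polynomial.coeff_C_mul, Polynomial.coeff_X_pow,
    Finset.sum_ite_eq', hn] using h2

private lemma map_coeff_zero' {M : Type*} [NormedAddCommGroup M] [InnerProductSpace ℂ M]
    [FiniteDimensional ℂ M] {N : ℕ} (v : ℕ → M →ₗ[ℂ] M)
    (h : ∀ l : ℂ, ∑ n ∈ Finset.range N, l ^ n • v n = 0) :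
    ∀ n, n < N → v n = 0 := by
  intro n hn
  ext x
  have hx : ∀ y : M, (inner ℂ y (v n x) : ℂ) = 0 := by
    intro y
    refine coeff_zero' (fun k => inner ℂ y (v k x)) ?_ n hn
    intro l
    have h2 := congrArg (fun f : M →ₗ[ℂ] M => (inner ℂ y (f x) : ℂ)) (h l)
    simpa [LinearMap.sum_apply, inner_sum, inner_smul_right, smul_eq_mul] using h2
  simpa [inner_self_eq_zero] using hx (v n x)

/-- If additionally `F` preserves adjoints (encoded by `hstar`, from
`F((λ·id)*) = F(λ·id)*`), then each coefficient `uₙ` of `F(λ·id) = Σ uₙ λⁿ`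
is a self-adjoint (orthogonal) projection. -/
theorem stmt_10 {M : Type*} [NormedAddCommGroup M] [InnerProductSpace ℂ M]
    [FiniteDimensional ℂ M]
    (N : ℕ) (u : ℕ → M →ₗ[ℂ] M)
    (hzero : ∀ n, N ≤ n → u n = 0)
    (hmul : ∀ l μ : ℂ,
      (∑ n ∈ Finset.range N, l ^ n • u n) ∘ₗ (∑ n ∈ Finset.range N, μ ^ n • u n)
        = ∑ n ∈ Finset.range N, (l * μ) ^ n • u n)
    (hone : ∑ n ∈ Finset.range N, u n = LinearMap.id)
    (hstar : ∀ l : ℂ, LinearMap.adjoint (∑ n ∈ Finset.range N, l ^ n • u n)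
      = ∑ n ∈ Finset.range N, (starRingEnd ℂ l) ^ n • u n) :
    ∀ n, LinearMap.adjoint (u n) = u n ∧ u n ∘ₗ u n = u n := by
  -- self-adjointness
  have hadj : ∀ n, n < N → LinearMap.adjoint (u n) = u n := by
    have h0 : ∀ μ : ℂ,
        ∑ n ∈ Finset.range N, μ ^ n • (LinearMap.adjoint (u n) - u n) = 0 := by
      intro μ
      have h1 := hstar (starRingEnd ℂ μ)
      have hL : LinearMap.adjoint (∑ n ∈ Finset.range N, (starRingEnd ℂ μ) ^ n • u n)
          = ∑ n ∈ Finset.range N, μ ^ n • LinearMap.adjoint (u n) := by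
        rw [map_sum]
        refine Finset.sum_congr rfl fun n _ => ?_
        rw [LinearEquiv.map_smulₛₗ LinearMap.adjoint]
        simp
      rw [hL] at h1
      simp only [RingHomCompTriple.comp_apply, Complex.conj_conj] at h1
      simp [smul_sub, Finset.sum_sub_distrib, h1]
    intro n hn
    exact sub_eq_zero.mp
      (map_coeff_zero' (fun n => LinearMap.adjoint (u n) - u n) h0 n hn)
  -- idempotency
  have hid : ∀ n, n < N → u n ∘ₗ u n = u n := by
    intro j hj
    have hw : ∀ l : ℂ,
        (∑ i ∈ Finset.range N, l ^ i • u i) ∘ₗ u j = l ^ j • u j := by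
      intro l
      have h0 : ∀ μ : ℂ, ∑ k ∈ Finset.range N,
          μ ^ k • ((∑ i ∈ Finset.range N, l ^ i • u i) ∘ₗ u k - l ^ k • u k) = 0 := by
        intro μ
        have h1 := hmul l μ
        have hcomp : (∑ n ∈ Finset.range N, l ^ n • u n) ∘ₗ
            (∑ n ∈ Finset.range N, μ ^ n • u n)
            = ∑ k ∈ Finset.range N,
                μ ^ k • ((∑ i ∈ Finset.range N, l ^ i • u i) ∘ₗ u k) := by
          ext x
          simp only [LinearMap.comp_apply, LinearMap.sum_apply, LinearMap.smul_apply, map_sum,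
            map_smul]
        rw [hcomp] at h1
        have h2 : ∑ k ∈ Finset.range N, (l * μ) ^ k • u k
            = ∑ k ∈ Finset.range N, μ ^ k • (l ^ k • u k) := by
          refine Finset.sum_congr rfl fun k _ => ?_
          rw [mul_pow, mul_comm, mul_smul]
        rw [h2] at h1
        simp [smul_sub, Finset.sum_sub_distrib, h1]
      exact sub_eq_zero.mp (map_coeff_zero'
        (fun k => (∑ i ∈ Finset.range N, l ^ i • u i) ∘ₗ u k - l ^ k • u k) h0 j hj)
    have h0 : ∀ l : ℂ, ∑ i ∈ Finset.range N,
        l ^ i • (u i ∘ₗ u j - if i = j then u j else 0) = 0 := by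
      intro l
      have h1 := hw l
      have hcomp : (∑ i ∈ Finset.range N, l ^ i • u i) ∘ₗ u j
          = ∑ i ∈ Finset.range N, l ^ i • (u i ∘ₗ u j) := by
        ext x
        simp [LinearMap.sum_apply]
      rw [hcomp] at h1
      have h2 : ∑ i ∈ Finset.range N, l ^ i • (if i = j then u j else 0 : M →ₗ[ℂ] M)
          = l ^ j • u j := by
        simp only [smul_ite, smul_zero]
        simp [Finset.sum_ite_eq', Finset.mem_range.mpr hj]
      simp [smul_sub, Finset.sum_sub_distrib, h1, h2, hj]
    have h3 := map_coeff_zero'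
      (fun i => u i ∘ₗ u j - if i = j then u j else 0) h0 j hj
    simpa using sub_eq_zero.mp h3
  intro n
  by_cases hn : n < N
  · exact ⟨hadj n hn, hid n hn⟩
  · have h0 := hzero n (le_of_not_gt hn)
    simp [h0]
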